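/- Let n, τ be orthonormal vectors in ℝ², let γ₊, γ₋ > 0, and let U, w⁺, w⁻, z⁺, z⁻ ∈ ℝ² satisfy: ⟨U, n⟩ = 0 (the field is tangential to the interface); ⟨w⁺, τ⟩ = ⟨w⁻, τ⟩ and γ₊⟨w⁺, n⟩ = γ₋⟨w⁻, n⟩ (transmission conditions for the first gradient); ⟨z⁺, τ⟩ = ⟨z⁻, τ⟩ and γ₊⟨z⁺, n⟩ = γ₋⟨z⁻, n⟩ (transmission conditions for the second gradient). Define b(w, z) = ⟨U, w⟩ z + ⟨U, z⟩ w − ⟨w, z⟩ U. Then γ₊ ⟨b(w⁺, z⁺), n⟩ = γ₋ ⟨b(w⁻, z⁻), n⟩; that is, the jump [γ b · n] across the interface vanishes. -/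

import Mathlib

open scoped RealInnerProductSpace

/-- the jump `[γ b · n]` across a flat interface vanishes when the
field `U` is tangential and the traces satisfy the transmission conditions. -/
theorem stmt_12 (n τ : EuclideanSpace ℝ (Fin 2))
    (hn : ‖n‖ = 1) (hτ : ‖τ‖ = 1) (hnτ : ⟪n, τ⟫ = 0)
    (γp γm : ℝ) (hγp : 0 < γp) (hγm : 0 < γm)
    (U wp wm zp zm : EuclideanSpace ℝ (Fin 2))
    (hU : ⟪U, n⟫ = 0)
    (hwτ : ⟪wp, τ⟫ = ⟪wm, τ⟫) (hwn : γp * ⟪wp, n⟫ = γm * ⟪wm, n⟫)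
    (hzτ : ⟪zp, τ⟫ = ⟪zm, τ⟫) (hzn : γp * ⟪zp, n⟫ = γm * ⟪zm, n⟫)
    (b : EuclideanSpace ℝ (Fin 2) → EuclideanSpace ℝ (Fin 2) → EuclideanSpace ℝ (Fin 2))
    (hb : b = fun w z => ⟪U, w⟫ • z + ⟪U, z⟫ • w - ⟪w, z⟫ • U) :
    γp * ⟪b wp zp, n⟫ = γm * ⟪b wm zm, n⟫ := by
  -- orthonormal family
  have hon : Orthonormal ℝ (![n, τ] : Fin 2 → EuclideanSpace ℝ (Fin 2)) := by
    rw [orthonormal_iff_ite]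
    intro i j
    fin_cases i <;> fin_cases j <;>
      simp only [Matrix.cons_val_zero, Matrix.cons_val_one, Matrix.head_cons]
    · show (⟪n, n⟫ : ℝ) = if True then 1 else 0
      rw [if_pos trivial, real_inner_self_eq_norm_mul_norm, hn]; norm_num
    · show (⟪n, τ⟫ : ℝ) = if False then 1 else 0
      rw [if_neg not_false]; exact hnτ
    · show (⟪τ, n⟫ : ℝ) = if False then 1 else 0
      rw [if_neg not_false, real_inner_comm]; exact hnτ
    · show (⟪τ, τ⟫ : ℝ) = if True then 1 else 0
      rw [if_pos trivial, real_inner_self_eq_norm_mul_norm, hτ]; norm_num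
  have hcard : Fintype.card (Fin 2) =
      Module.finrank ℝ (EuclideanSpace ℝ (Fin 2)) := by simp
  let B := basisOfOrthonormalOfCardEqFinrank hon hcard
  have hB : ⇑B = ![n, τ] := coe_basisOfOrthonormalOfCardEqFinrank hon hcard
  let OB : OrthonormalBasis (Fin 2) ℝ (EuclideanSpace ℝ (Fin 2)) :=
    B.toOrthonormalBasis (by rwa [hB])
  have hOB : ∀ i, OB i = ![n, τ] i := by
    intro i
    simp only [OB, Module.Basis.coe_toOrthonormalBasis, hB]
  -- inner product expansion
  have key : ∀ x y : EuclideanSpace ℝ (Fin 2),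
      ⟪x, y⟫ = ⟪x, n⟫ * ⟪n, y⟫ + ⟪x, τ⟫ * ⟪τ, y⟫ := by
    intro x y
    have := OB.sum_inner_mul_inner x y
    rw [Fin.sum_univ_two, hOB 0, hOB 1] at this
    simpa using this.symm
  have hUw : ∀ w : EuclideanSpace ℝ (Fin 2), ⟪U, w⟫ = ⟪U, τ⟫ * ⟪w, τ⟫ := by
    intro w
    rw [key U w, hU, real_inner_comm τ w]
    ring
  subst hb
  simp only [inner_add_left, inner_sub_left, real_inner_smul_left,
    hUw wp, hUw wm, hUw zp, hUw zm, hU]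
  have e1 : γp * ⟪zp, n⟫ = γm * ⟪zm, n⟫ := hzn
  have e2 : γp * ⟪wp, n⟫ = γm * ⟪wm, n⟫ := hwn
  have : ⟪U, τ⟫ * ⟪wp, τ⟫ * (γp * ⟪zp, n⟫) + ⟪U, τ⟫ * ⟪zp, τ⟫ * (γp * ⟪wp, n⟫)
      = ⟪U, τ⟫ * ⟪wm, τ⟫ * (γm * ⟪zm, n⟫) + ⟪U, τ⟫ * ⟪zm, τ⟫ * (γm * ⟪wm, n⟫) := by
    rw [e1, e2, hwτ, hzτ]
  nlinarith [this]
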